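/- Let G be a group with a finite normal subgroup H, and let g ∈ G \ H with g² ∉ H. Let R be the submatrix of the Cayley table of G with rows indexed by H and columns indexed by H ∪ gH, which contains the m = 2|H| symbols H ∪ gH. Then R is not contained in any m × m subsquare of the Cayley table of G. -/
import Mathlib


open Pointwise

theorem stmt6 {G : Type*} [Group G] [DecidableEq G] (H : Subgroup G) [H.Normal] [Finite H]
    (g : G) (hg : g ∉ H) (hg2 : g ^ 2 ∉ H) :
    ¬ ∃ (R C : Finset G),
        (H : Set G) ⊆ (R : Set G) ∧
        ((H : Set G) ∪ g • (H : Set G)) ⊆ (C : Set G) ∧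
        R.card = 2 * Nat.card H ∧ C.card = 2 * Nat.card H ∧
        ((R ×ˢ C).image (fun p => p.1 * p.2)).card = 2 * Nat.card H := by
  rintro ⟨R, C, hR, hC, hRcard, hCcard, hScard⟩
  set S : Finset G := (R ×ˢ C).image (fun p => p.1 * p.2) with hS
  have hone : (1 : G) ∈ (H : Set G) := H.one_mem
  have hmul : ∀ r ∈ R, ∀ c ∈ C, r * c ∈ S := by
    intro r hr c hc
    exact Finset.mem_image.2 ⟨(r, c), Finset.mem_product.2 ⟨hr, hc⟩, rfl⟩
  -- H is finite as a set
  have hHfin : (H : Set G).Finite := Set.toFinite _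
  have hgHfin : (g • (H : Set G)).Finite := hHfin.smul_set
  have hHcard : (H : Set G).ncard = Nat.card H := by
    rw [← Nat.card_coe_set_eq]
    exact Nat.card_congr (Equiv.setCongr rfl)
  have hgHcard : (g • (H : Set G)).ncard = Nat.card H := by
    rw [Set.ncard_smul_set, hHcard]
  have hdisj : Disjoint (H : Set G) (g • (H : Set G)) := by
    rw [Set.disjoint_left]
    rintro x hx ⟨h, hh, rfl⟩
    exact hg (by simpa using H.mul_mem hx (H.inv_mem hh) : g ∈ H)
  have hUcard : ((H : Set G) ∪ g • (H : Set G)).ncard = 2 * Nat.card H := by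
    rw [Set.ncard_union_eq hdisj hHfin hgHfin, hHcard, hgHcard]; ring
  -- the union is contained in S
  have hsub : ((H : Set G) ∪ g • (H : Set G)) ⊆ (S : Set G) := by
    rintro x (hx | hx)
    · have := hmul x (hR hx) 1 (hC (Or.inl hone))
      simpa using this
    · have := hmul 1 (hR hone) x (hC (Or.inr hx))
      simpa using this
  have hSeq : ((H : Set G) ∪ g • (H : Set G)) = (S : Set G) := by
    apply Set.eq_of_subset_of_ncard_le hsub
    · rw [hUcard, Set.ncard_coe_finset, hScard]
  -- find r ∈ R with r ∉ H
  have hpos : 0 < Nat.card H := Nat.card_pos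
  have : ¬ (R : Set G) ⊆ (H : Set G) := by
    intro hRH
    have := Set.ncard_le_ncard hRH hHfin
    rw [Set.ncard_coe_finset, hRcard, hHcard] at this
    omega
  obtain ⟨r, hrR, hrH⟩ := Set.not_subset.1 this
  -- r ∈ S since 1 ∈ C
  have hrS : r ∈ S := by simpa using hmul r hrR 1 (hC (Or.inl hone))
  have hrU : r ∈ (H : Set G) ∪ g • (H : Set G) := hSeq ▸ hrS
  rcases hrU with hrU | ⟨h, hh, rfl⟩
  · exact hrH hrU
  -- r = g * h; consider r * g
  have hgC : g ∈ C := hC (Or.inr ⟨1, hone, by simp⟩)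
  have hrgS : g * h * g ∈ S := hmul _ hrR g hgC
  have hrgU : g * h * g ∈ (H : Set G) ∪ g • (H : Set G) := hSeq ▸ hrgS
  have hconj : g⁻¹ * h * g ∈ H := Subgroup.Normal.conj_mem' ‹H.Normal› h hh g
  have key : g * h * g = g ^ 2 * (g⁻¹ * h * g) := by group
  rcases hrgU with hx | ⟨h', hh', heq⟩
  · apply hg2
    have he : g ^ 2 = (g * h * g) * (g⁻¹ * h * g)⁻¹ := by
      rw [pow_two]; group
    rw [he]
    exact H.mul_mem hx (H.inv_mem hconj)
  · apply hg
    have hg' : h' = h * g := mul_left_cancel (a := g) (by simpa [smul_eq_mul, mul_assoc] using heq)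
    have he : g = h⁻¹ * h' := by rw [hg']; group
    rw [he]
    exact H.mul_mem (H.inv_mem hh) hh'
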